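/- arXiv:2011.14902 — 4 statements merged into one kernel-verified Lean document; each statement's English description precedes it below -/
import Mathlib

section
/- Let A ⊆ B ⊆ V and j ∈ V \ B in a finite directed graph G. Let C be the set of vertices reachable from j but not reachable from A, and D the set of vertices reachable from j but not reachable from B. Then D ⊆ C and σ_w(A ∪ {j}) − σ_w(A) = Σ_{i ∈ C} w(i) while σ_w(B ∪ {j}) − σ_w(B) = Σ_{i ∈ D} w(i). -/
open scoped Classical

/-- Total weight of all vertices reachable (via directed paths, possibly of
length zero) from the set `A` in the directed graph with edge relation `E`. -/
noncomputable def sigmaW {V : Type*} [Fintype V] (E : V → V → Prop) (w : V → ℝ)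
    (A : Finset V) : ℝ :=
  ∑ v ∈ Finset.univ.filter (fun v => ∃ a ∈ A, Relation.ReflTransGen E a v), w v

lemma marg {V : Type*} [Fintype V] [DecidableEq V]
    (E : V → V → Prop) (w : V → ℝ) (S : Finset V) (j : V) :
    sigmaW E w (insert j S) - sigmaW E w S =
      ∑ i ∈ Finset.univ.filter (fun v => Relation.ReflTransGen E j v ∧
        ¬ ∃ a ∈ S, Relation.ReflTransGen E a v), w i := by
  unfold sigmaW
  rw [sub_eq_iff_eq_add, ← Finset.sum_union]
  · apply Finset.sum_congr _ (fun _ _ => rfl)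
    ext v
    simp only [Finset.mem_union, Finset.mem_filter, Finset.mem_univ, true_and,
      Finset.mem_insert]
    constructor
    · rintro ⟨a, (rfl | ha), h⟩
      · by_cases hs : ∃ a ∈ S, Relation.ReflTransGen E a v
        · exact Or.inr hs
        · exact Or.inl ⟨h, hs⟩
      · exact Or.inr ⟨a, ha, h⟩
    · rintro (⟨h, _⟩ | ⟨a, ha, h⟩)
      · exact ⟨j, Or.inl rfl, h⟩
      · exact ⟨a, Or.inr ha, h⟩
  · rw [Finset.disjoint_left]
    intro v hv hv'
    simp only [Finset.mem_filter] at hv hv'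
    exact hv.2.2 hv'.2

/-- Let `A ⊆ B ⊆ V` and `j ∉ B`. Let `C` be the vertices reachable from `j`
but not from `A`, and `D` the vertices reachable from `j` but not from `B`.
Then `D ⊆ C`, and the marginal gains of adding `j` to `A` (resp. `B`) are
exactly the total weights of `C` (resp. `D`). -/
theorem marginal_gain_eq_sum {V : Type*} [Fintype V] [DecidableEq V]
    (E : V → V → Prop) (w : V → ℝ) (hw : ∀ v, 0 ≤ w v)
    (A B : Finset V) (j : V) (hAB : A ⊆ B) (hj : j ∉ B) :
    (Finset.univ.filter (fun v => Relation.ReflTransGen E j v ∧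
        ¬ ∃ b ∈ B, Relation.ReflTransGen E b v)) ⊆
      (Finset.univ.filter (fun v => Relation.ReflTransGen E j v ∧
        ¬ ∃ a ∈ A, Relation.ReflTransGen E a v)) ∧
    sigmaW E w (insert j A) - sigmaW E w A =
      ∑ i ∈ Finset.univ.filter (fun v => Relation.ReflTransGen E j v ∧
        ¬ ∃ a ∈ A, Relation.ReflTransGen E a v), w i ∧
    sigmaW E w (insert j B) - sigmaW E w B =
      ∑ i ∈ Finset.univ.filter (fun v => Relation.ReflTransGen E j v ∧
        ¬ ∃ b ∈ B, Relation.ReflTransGen E b v), w i := by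
  refine ⟨?_, marg E w A j, marg E w B j⟩
  intro v hv
  simp only [Finset.mem_filter] at hv ⊢
  exact ⟨hv.1, hv.2.1, fun ⟨a, ha, h⟩ => hv.2.2 ⟨a, hAB ha, h⟩⟩
end

section
/- Let f be a monotone submodular set function on subsets of a finite set V with f(∅) = 0, and let A_k be the set produced after k steps of the greedy algorithm that at each step adds an element maximizing the marginal gain. Then for any set A* with |A*| ≤ k, f(A_k) ≥ (1 − 1/e) · f(A*); in particular, the greedy algorithm is an e/(e−1) approximation for maximizing f subject to a cardinality constraint. -/
/-- Greedy maximization of a monotone submodular set function `f` with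
`f(∅) = 0`: after `k` greedy steps, the value is at least `(1 − 1/e)` times the
value of any set of cardinality at most `k`; i.e., greedy is an `e/(e−1)`
approximation algorithm. -/
theorem greedy_submodular_approx {V : Type*} [Fintype V] [DecidableEq V]
    (f : Finset V → ℝ)
    (hmono : ∀ (A : Finset V) (j : V), f A ≤ f (insert j A))
    (hsub : ∀ (A B : Finset V) (j : V), A ⊆ B → j ∉ B →
      f (insert j B) - f B ≤ f (insert j A) - f A)
    (hempty : f ∅ = 0)
    (A : ℕ → Finset V) (hA0 : A 0 = ∅)
    (hgreedy : ∀ i, ∃ j, A (i + 1) = insert j (A i) ∧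
      ∀ c, f (insert c (A i)) ≤ f (insert j (A i)))
    (k : ℕ) (Astar : Finset V) (hcard : Astar.card ≤ k) :
    (1 - 1 / Real.exp 1) * f Astar ≤ f (A k) := by
  -- monotonicity under union
  have monoU : ∀ (B S : Finset V), f B ≤ f (B ∪ S) := by
    intro B S
    induction S using Finset.induction_on with
    | empty => simp
    | @insert j S hjS ih =>
      calc f B ≤ f (B ∪ S) := ih
        _ ≤ f (insert j (B ∪ S)) := hmono _ _
        _ = f (B ∪ insert j S) := by rw [Finset.union_insert]
  have hAstar0 : 0 ≤ f Astar := by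
    have := monoU ∅ Astar
    simpa [hempty] using this
  -- marginal sum bound
  have sumB : ∀ (B S : Finset V),
      f (B ∪ S) - f B ≤ ∑ j ∈ S, (f (insert j B) - f B) := by
    intro B S
    induction S using Finset.induction_on with
    | empty => simp
    | @insert j S hjS ih =>
      rw [Finset.sum_insert hjS, Finset.union_insert]
      have key : f (insert j (B ∪ S)) - f (B ∪ S) ≤ f (insert j B) - f B := by
        by_cases hmem : j ∈ B ∪ S
        · rw [Finset.insert_eq_self.mpr hmem]
          have := hmono B j; linarith
        · exact hsub B (B ∪ S) j Finset.subset_union_left hmem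
      linarith
  -- greedy step bound: f Astar - f (A i) ≤ k * (f (A (i+1)) - f (A i))
  rcases Nat.eq_zero_or_pos k with hk0 | hkpos
  · subst hk0
    have : Astar = ∅ := Finset.card_eq_zero.mp (Nat.le_zero.mp hcard)
    subst this
    have h0 : f (A 0) = 0 := by rw [hA0, hempty]
    rw [hempty, h0]
    simp
  have hkR : (0:ℝ) < (k:ℝ) := by exact_mod_cast hkpos
  have step : ∀ i, f Astar - f (A i) ≤ (k:ℝ) * (f (A (i+1)) - f (A i)) := by
    intro i
    obtain ⟨j, hj, hjmax⟩ := hgreedy i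
    have gain0 : 0 ≤ f (A (i+1)) - f (A i) := by
      rw [hj]; have := hmono (A i) j; linarith
    have h1 : f Astar ≤ f (A i ∪ Astar) := by
      have := monoU Astar (A i)
      calc f Astar ≤ f (Astar ∪ A i) := this
        _ = f (A i ∪ Astar) := by rw [Finset.union_comm]
    have h2 := sumB (A i) Astar
    have h3 : ∑ c ∈ Astar, (f (insert c (A i)) - f (A i))
        ≤ ∑ _c ∈ Astar, (f (A (i+1)) - f (A i)) := by
      apply Finset.sum_le_sum
      intro c _
      have := hjmax c
      rw [hj]; linarith
    rw [Finset.sum_const, nsmul_eq_mul] at h3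
    have h4 : (Astar.card : ℝ) * (f (A (i+1)) - f (A i))
        ≤ (k:ℝ) * (f (A (i+1)) - f (A i)) := by
      apply mul_le_mul_of_nonneg_right _ gain0
      exact_mod_cast hcard
    linarith
  -- gap decay
  have decay : ∀ i, f Astar - f (A i) ≤ (1 - 1/(k:ℝ))^i * f Astar := by
    intro i
    induction i with
    | zero => rw [hA0, hempty]; simp
    | succ i ih =>
      have hfac : (0:ℝ) ≤ 1 - 1/(k:ℝ) := by
        have : 1/(k:ℝ) ≤ 1 := by
          rw [div_le_one hkR]; exact_mod_cast hkpos
        linarith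
      have hstep := step i
      have h5 : f Astar - f (A (i+1)) ≤ (1 - 1/(k:ℝ)) * (f Astar - f (A i)) := by
        have hdiv : (f Astar - f (A i)) / (k:ℝ) ≤ f (A (i+1)) - f (A i) := by
          rw [div_le_iff₀ hkR]; linarith [hstep]
        have : (1 - 1/(k:ℝ)) * (f Astar - f (A i))
            = (f Astar - f (A i)) - (f Astar - f (A i)) / (k:ℝ) := by ring
        rw [this]; linarith
      calc f Astar - f (A (i+1)) ≤ (1 - 1/(k:ℝ)) * (f Astar - f (A i)) := h5
        _ ≤ (1 - 1/(k:ℝ)) * ((1 - 1/(k:ℝ))^i * f Astar) :=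
            mul_le_mul_of_nonneg_left ih hfac
        _ = (1 - 1/(k:ℝ))^(i+1) * f Astar := by ring
  -- (1 - 1/k)^k ≤ exp(-1) = 1/e
  have hexp : (1 - 1/(k:ℝ))^k ≤ 1 / Real.exp 1 := by
    have h1 : 1 - 1/(k:ℝ) ≤ Real.exp (-(1/(k:ℝ))) := by
      have := Real.add_one_le_exp (-(1/(k:ℝ)))
      linarith
    have hfac : (0:ℝ) ≤ 1 - 1/(k:ℝ) := by
      have : 1/(k:ℝ) ≤ 1 := by
        rw [div_le_one hkR]; exact_mod_cast hkpos
      linarith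
    have h2 : (1 - 1/(k:ℝ))^k ≤ (Real.exp (-(1/(k:ℝ))))^k :=
      pow_le_pow_left₀ hfac h1 k
    have h3 : (Real.exp (-(1/(k:ℝ))))^k = Real.exp (-1) := by
      rw [← Real.exp_nat_mul]
      congr 1
      field_simp
    rw [h3] at h2
    rw [Real.exp_neg, inv_eq_one_div] at h2
    exact h2
  have hfinal := decay k
  have h6 : (1 - 1/(k:ℝ))^k * f Astar ≤ (1 / Real.exp 1) * f Astar :=
    mul_le_mul_of_nonneg_right hexp hAstar0
  nlinarith [hfinal, h6]
end

section
/- Let f be a monotone submodular set function with f(∅) = 0 and let A_i denote the greedy sets. Then for any set A* with |A*| ≤ k and any i ≥ 0, f(A*) − f(A_{i+1}) ≤ (1 − 1/k)(f(A*) − f(A_i)). Consequently f(A*) − f(A_k) ≤ (1 − 1/k)^k · f(A*). -/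
section aux
variable {V : Type*} [DecidableEq V] (f : Finset V → ℝ)

lemma greedy_aux_mono (hmono : ∀ (A : Finset V) (j : V), f A ≤ f (insert j A))
    (S B : Finset V) : f B ≤ f (B ∪ S) := by
  induction S using Finset.induction_on with
  | empty => simp
  | @insert a S ha ih =>
    calc f B ≤ f (B ∪ S) := ih
    _ ≤ f (insert a (B ∪ S)) := hmono _ _
    _ = f (B ∪ insert a S) := by rw [Finset.union_insert]

lemma greedy_aux_sum (hmono : ∀ (A : Finset V) (j : V), f A ≤ f (insert j A))
    (hsub : ∀ (A B : Finset V) (j : V), A ⊆ B → j ∉ B →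
      f (insert j B) - f B ≤ f (insert j A) - f A)
    (S B : Finset V) : f (B ∪ S) - f B ≤ ∑ e ∈ S, (f (insert e B) - f B) := by
  induction S using Finset.induction_on with
  | empty => simp
  | @insert a S ha ih =>
    rw [Finset.sum_insert ha, Finset.union_insert]
    have h1 : f (insert a (B ∪ S)) - f (B ∪ S) ≤ f (insert a B) - f B := by
      by_cases haB : a ∈ B ∪ S
      · rw [Finset.insert_eq_self.mpr haB]
        have := hmono B a
        linarith
      · exact hsub B (B ∪ S) a Finset.subset_union_left haB
    linarith

end aux

/-- For the greedy algorithm on a monotone submodular function `f` with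
`f(∅) = 0`, and any `Astar` with `|Astar| ≤ k`:
`f(Astar) − f(A_{i+1}) ≤ (1 − 1/k)(f(Astar) − f(A_i))` for every `i`, and
consequently `f(Astar) − f(A_k) ≤ (1 − 1/k)^k · f(Astar)`. -/
theorem greedy_per_step_bound {V : Type*} [Fintype V] [DecidableEq V]
    (f : Finset V → ℝ)
    (hmono : ∀ (A : Finset V) (j : V), f A ≤ f (insert j A))
    (hsub : ∀ (A B : Finset V) (j : V), A ⊆ B → j ∉ B →
      f (insert j B) - f B ≤ f (insert j A) - f A)
    (hempty : f ∅ = 0)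
    (A : ℕ → Finset V) (hA0 : A 0 = ∅)
    (hgreedy : ∀ i, ∃ j, A (i + 1) = insert j (A i) ∧
      ∀ c, f (insert c (A i)) ≤ f (insert j (A i)))
    (k : ℕ) (Astar : Finset V) (hcard : Astar.card ≤ k) :
    (∀ i, f Astar - f (A (i + 1)) ≤ (1 - 1 / (k : ℝ)) * (f Astar - f (A i))) ∧
      f Astar - f (A k) ≤ (1 - 1 / (k : ℝ)) ^ k * f Astar := by
  have hstep : ∀ i, f Astar - f (A (i + 1)) ≤ (1 - 1 / (k : ℝ)) * (f Astar - f (A i)) := by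
    intro i
    obtain ⟨j, hj, hbest⟩ := hgreedy i
    rcases Nat.eq_zero_or_pos k with hk | hk
    · subst hk
      simp only [Nat.cast_zero, div_zero, sub_zero, one_mul]
      have : f (A i) ≤ f (A (i + 1)) := by rw [hj]; exact hmono _ _
      linarith
    · have hkR : (0 : ℝ) < k := by exact_mod_cast hk
      set B := A i with hB
      have h1 : f Astar ≤ f (Astar ∪ B) := greedy_aux_mono f hmono B Astar
      have h2 : f (B ∪ Astar) - f B ≤ ∑ e ∈ Astar, (f (insert e B) - f B) :=
        greedy_aux_sum f hmono hsub Astar B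
      have hδ : f B ≤ f (A (i + 1)) := by rw [hj]; exact hmono _ _
      have h3 : ∑ e ∈ Astar, (f (insert e B) - f B) ≤
          ∑ _e ∈ Astar, (f (A (i + 1)) - f B) := by
        apply Finset.sum_le_sum
        intro e _
        have := hbest e
        rw [hj]
        linarith
      have h4 : ∑ _e ∈ Astar, (f (A (i + 1)) - f B) =
          (Astar.card : ℝ) * (f (A (i + 1)) - f B) := by
        rw [Finset.sum_const, nsmul_eq_mul]
      have h5 : (Astar.card : ℝ) * (f (A (i + 1)) - f B) ≤
          (k : ℝ) * (f (A (i + 1)) - f B) := by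
        apply mul_le_mul_of_nonneg_right _ (by linarith)
        exact_mod_cast hcard
      have h6 : f Astar - f B ≤ (k : ℝ) * (f (A (i + 1)) - f B) := by
        rw [Finset.union_comm] at h1
        calc f Astar - f B ≤ f (B ∪ Astar) - f B := by linarith
        _ ≤ _ := le_trans h2 (by rw [h4] at h3; linarith)
      have hinv : (1 / (k : ℝ)) * (f Astar - f B) ≤ f (A (i + 1)) - f B := by
        rw [div_mul_eq_mul_div, one_mul, div_le_iff₀ hkR]
        nlinarith
      nlinarith
  refine ⟨hstep, ?_⟩
  have hr : (0 : ℝ) ≤ 1 - 1 / (k : ℝ) := by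
    rcases Nat.eq_zero_or_pos k with hk | hk
    · simp [hk]
    · have hkR : (1 : ℝ) ≤ k := by exact_mod_cast hk
      have : 1 / (k : ℝ) ≤ 1 := by
        rw [div_le_one (by linarith)]; exact hkR
      linarith
  have hiter : ∀ n, f Astar - f (A n) ≤ (1 - 1 / (k : ℝ)) ^ n * (f Astar - f (A 0)) := by
    intro n
    induction n with
    | zero => simp
    | succ n ih =>
      calc f Astar - f (A (n + 1)) ≤ (1 - 1 / (k : ℝ)) * (f Astar - f (A n)) := hstep n
      _ ≤ (1 - 1 / (k : ℝ)) * ((1 - 1 / (k : ℝ)) ^ n * (f Astar - f (A 0))) :=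
          mul_le_mul_of_nonneg_left ih hr
      _ = (1 - 1 / (k : ℝ)) ^ (n + 1) * (f Astar - f (A 0)) := by ring
  have := hiter k
  rwa [hA0, hempty, sub_zero] at this
end

section
/- Let C' ≥ K_s·w̲_I + (K_p − K_s)·w̲_J and C ≤ K_s·w̄_I + (K_p − K_s)·w̄_J with 0 < w̲_I ≤ w̄_I, 0 < w̲_J ≤ w̄_J, and K_s ≤ K_p. Then C · w̲_I · w̲_J ≤ C' · w̄_I · w̄_J, i.e., C/C' ≤ (w̄_I · w̄_J)/(w̲_I · w̲_J). -/
/-- Key inequality in the bipartite approximation bound: if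
`C' ≥ K_s·w̲_I + (K_p − K_s)·w̲_J` and `C ≤ K_s·w̄_I + (K_p − K_s)·w̄_J` with
`0 < w̲_I ≤ w̄_I`, `0 < w̲_J ≤ w̄_J` and `K_s ≤ K_p`, then
`C·w̲_I·w̲_J ≤ C'·w̄_I·w̄_J`, i.e. `C/C' ≤ (w̄_I·w̄_J)/(w̲_I·w̲_J)`. -/
theorem bipartite_key_inequality (Ks Kp : ℕ) (hK : Ks ≤ Kp)
    (wIl wIu wJl wJu C C' : ℝ)
    (hI0 : 0 < wIl) (hI : wIl ≤ wIu) (hJ0 : 0 < wJl) (hJ : wJl ≤ wJu)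
    (hC' : (Ks : ℝ) * wIl + ((Kp : ℝ) - (Ks : ℝ)) * wJl ≤ C')
    (hC : C ≤ (Ks : ℝ) * wIu + ((Kp : ℝ) - (Ks : ℝ)) * wJu) :
    C * (wIl * wJl) ≤ C' * (wIu * wJu) ∧
      C / C' ≤ (wIu * wJu) / (wIl * wJl) := by
  have hIu : (0:ℝ) < wIu := lt_of_lt_of_le hI0 hI
  have hJu : (0:ℝ) < wJu := lt_of_lt_of_le hJ0 hJ
  have ha : (0:ℝ) ≤ (Ks : ℝ) := Nat.cast_nonneg _
  have hb : (0:ℝ) ≤ (Kp : ℝ) - (Ks : ℝ) := by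
    have : (Ks:ℝ) ≤ (Kp:ℝ) := Nat.cast_le.mpr hK; linarith
  have hmain : C * (wIl * wJl) ≤ C' * (wIu * wJu) := by
    have h1 : C * (wIl * wJl) ≤ ((Ks : ℝ) * wIu + ((Kp : ℝ) - (Ks : ℝ)) * wJu) * (wIl * wJl) := by
      apply mul_le_mul_of_nonneg_right hC (by positivity)
    have h2 : ((Ks : ℝ) * wIu + ((Kp : ℝ) - (Ks : ℝ)) * wJu) * (wIl * wJl) ≤
        ((Ks : ℝ) * wIl + ((Kp : ℝ) - (Ks : ℝ)) * wJl) * (wIu * wJu) := by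
      nlinarith [mul_nonneg ha (mul_nonneg hI0.le (sub_nonneg.mpr hJ)),
        mul_nonneg hb (mul_nonneg hJ0.le (sub_nonneg.mpr hI)),
        mul_le_mul hI hJ hJ0.le (le_trans hI0.le hI)]
    have h3 : ((Ks : ℝ) * wIl + ((Kp : ℝ) - (Ks : ℝ)) * wJl) * (wIu * wJu) ≤ C' * (wIu * wJu) := by
      apply mul_le_mul_of_nonneg_right hC'
      positivity
    linarith
  refine ⟨hmain, ?_⟩
  have hC'0 : 0 ≤ C' := le_trans (add_nonneg (mul_nonneg ha hI0.le) (mul_nonneg hb hJ0.le)) hC'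
  rcases eq_or_lt_of_le hC'0 with h | h
  · rw [← h, div_zero]
    positivity
  · rw [div_le_div_iff₀ h (by positivity)]
    linarith
end
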